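/- Let aₙ ≥ 0 and suppose the power series ∑ aₙ xⁿ converges for |x| < 1 and (1−x)·∑ₙ aₙ xⁿ → A as x → 1⁻. Then ∑_{n=0}^{N} aₙ = A·N·(1+o(1)) as N → ∞. -/

import Mathlib

open Filter Set Polynomial Real Topology

namespace HL

variable (a : ℕ → ℝ)

lemma summable_base (hconv : ∀ x : ℝ, |x| < 1 → Summable (fun n => a n * x ^ n))
    {x : ℝ} (hx : x ∈ Set.Ioo (0:ℝ) 1) : Summable (fun n => a n * x ^ n) :=
  hconv x (by rw [abs_of_pos hx.1]; exact hx.2)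

lemma summable_pow (ha : ∀ n, 0 ≤ a n)
    (hconv : ∀ x : ℝ, |x| < 1 → Summable (fun n => a n * x ^ n))
    {x : ℝ} (hx : x ∈ Set.Ioo (0:ℝ) 1) (k : ℕ) :
    Summable (fun n => a n * x ^ n * (x ^ n) ^ k) := by
  refine Summable.of_nonneg_of_le (fun n => ?_) (fun n => ?_) (summable_base a hconv hx)
  · exact mul_nonneg (mul_nonneg (ha n) (pow_nonneg hx.1.le n))
      (pow_nonneg (pow_nonneg hx.1.le n) k)
  · have h1 : (x ^ n) ^ k ≤ 1 :=
      pow_le_one₀ (pow_nonneg hx.1.le n) (pow_le_one₀ hx.1.le hx.2.le)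
    have h2 : 0 ≤ a n * x ^ n := mul_nonneg (ha n) (pow_nonneg hx.1.le n)
    nlinarith

lemma summable_poly (ha : ∀ n, 0 ≤ a n)
    (hconv : ∀ x : ℝ, |x| < 1 → Summable (fun n => a n * x ^ n))
    {x : ℝ} (hx : x ∈ Set.Ioo (0:ℝ) 1) (p : ℝ[X]) :
    Summable (fun n => a n * x ^ n * p.eval (x ^ n)) := by
  induction p using Polynomial.induction_on with
  | C c =>
      simpa using (summable_pow a ha hconv hx 0).mul_right c
  | add p q hp hq =>
      simpa [mul_add] using hp.add hq
  | monomial k c _ =>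
      have h := ((summable_pow a ha hconv hx (k+1)).mul_right c)
      refine h.congr fun n => ?_
      simp only [eval_mul, eval_C, eval_pow, eval_X]
      ring


lemma tendsto_monomial (a : ℕ → ℝ) (A : ℝ)
    (hlim : Tendsto (fun x : ℝ => (1 - x) * ∑' n, a n * x ^ n) (𝓝[<] (1:ℝ)) (𝓝 A)) (k : ℕ) :
    Tendsto (fun x : ℝ => (1 - x) * ∑' n, a n * x ^ n * (x ^ n) ^ k)
      (𝓝[<] (1:ℝ)) (𝓝 (A / (k+1))) := by
  rw [← nhdsWithin_Ioo_eq_nhdsLT (zero_lt_one (α := ℝ))] at hlim ⊢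
  have hmap : Tendsto (fun x : ℝ => x ^ (k+1)) (𝓝[Ioo (0:ℝ) 1] 1) (𝓝[Ioo (0:ℝ) 1] 1) := by
    rw [tendsto_nhdsWithin_iff]
    constructor
    · have h := (continuous_pow (k+1)).tendsto (1:ℝ)
      simpa using h.mono_left nhdsWithin_le_nhds
    · filter_upwards [self_mem_nhdsWithin] with x hx
      exact ⟨pow_pos hx.1 _, pow_lt_one₀ hx.1.le hx.2 (Nat.succ_ne_zero k)⟩
  have h1 : Tendsto (fun x : ℝ => (1 - x ^ (k+1)) * ∑' n, a n * (x ^ (k+1)) ^ n)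
      (𝓝[Ioo (0:ℝ) 1] 1) (𝓝 A) := hlim.comp hmap
  have h2 : Tendsto (fun x : ℝ => ∑ i ∈ Finset.range (k+1), x ^ i)
      (𝓝[Ioo (0:ℝ) 1] 1) (𝓝 ((k:ℝ)+1)) := by
    have hc : Continuous fun x : ℝ => ∑ i ∈ Finset.range (k+1), x ^ i := by
      exact continuous_finset_sum _ fun i _ => continuous_pow i
    have h := hc.tendsto (1:ℝ)
    simp only [one_pow, Finset.sum_const, Finset.card_range, nsmul_eq_mul, mul_one] at h
    exact_mod_cast h.mono_left nhdsWithin_le_nhds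
  have h3 : Tendsto (fun x : ℝ =>
      (∑ i ∈ Finset.range (k+1), x ^ i)⁻¹ * ((1 - x ^ (k+1)) * ∑' n, a n * (x ^ (k+1)) ^ n))
      (𝓝[Ioo (0:ℝ) 1] 1) (𝓝 (((k:ℝ)+1)⁻¹ * A)) := (h2.inv₀ (by positivity)).mul h1
  have heq : ∀ x ∈ Ioo (0:ℝ) 1,
      (∑ i ∈ Finset.range (k+1), x ^ i)⁻¹ * ((1 - x ^ (k+1)) * ∑' n, a n * (x ^ (k+1)) ^ n)
      = (1 - x) * ∑' n, a n * x ^ n * (x ^ n) ^ k := by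
    intro x hx
    have hS : (0:ℝ) < ∑ i ∈ Finset.range (k+1), x ^ i := by
      apply Finset.sum_pos (fun i _ => pow_pos hx.1 i); simp
    have hgeo : (1 - x ^ (k+1)) = (1 - x) * ∑ i ∈ Finset.range (k+1), x ^ i := by
      have := geom_sum_mul x (k+1)
      linarith [this]
    have htsum : (∑' n, a n * (x ^ (k+1)) ^ n) = ∑' n, a n * x ^ n * (x ^ n) ^ k := by
      apply tsum_congr; intro n; ring
    rw [htsum, hgeo]
    field_simp
  refine Tendsto.congr' ?_ (by simpa [div_eq_inv_mul] using h3)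
  filter_upwards [self_mem_nhdsWithin] with x hx using heq x hx

lemma tendsto_poly (ha : ∀ n, 0 ≤ a n)
    (hconv : ∀ x : ℝ, |x| < 1 → Summable (fun n => a n * x ^ n)) (A : ℝ)
    (hlim : Tendsto (fun x : ℝ => (1 - x) * ∑' n, a n * x ^ n) (𝓝[<] (1:ℝ)) (𝓝 A))
    (p : ℝ[X]) :
    Tendsto (fun x : ℝ => (1 - x) * ∑' n, a n * x ^ n * p.eval (x ^ n)) (𝓝[<] (1:ℝ))
      (𝓝 (A * ∫ t in (0:ℝ)..1, p.eval t)) := by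
  induction p using Polynomial.induction_on with
  | C c =>
      have h1 : ∀ x : ℝ, (1 - x) * ∑' n, a n * x ^ n * c
          = ((1 - x) * ∑' n, a n * x ^ n) * c := by
        intro x
        rw [tsum_mul_right]
        ring
      simp only [eval_C, h1, intervalIntegral.integral_const, smul_eq_mul, sub_zero, one_mul]
      exact hlim.mul_const c
  | add p q hp hq =>
      have hint : (∫ t in (0:ℝ)..1, (p + q).eval t)
          = (∫ t in (0:ℝ)..1, p.eval t) + ∫ t in (0:ℝ)..1, q.eval t := by
        simp only [eval_add]
        exact intervalIntegral.integral_add (p.continuous.intervalIntegrable 0 1)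
          (q.continuous.intervalIntegrable 0 1)
      rw [hint, mul_add]
      refine Tendsto.congr' ?_ (hp.add hq)
      rw [← nhdsWithin_Ioo_eq_nhdsLT (zero_lt_one (α := ℝ))]
      filter_upwards [self_mem_nhdsWithin] with x hx
      have h := Summable.tsum_add (summable_poly a ha hconv hx p) (summable_poly a ha hconv hx q)
      calc (1 - x) * (∑' n, a n * x ^ n * p.eval (x ^ n))
          + (1 - x) * ∑' n, a n * x ^ n * q.eval (x ^ n)
          = (1 - x) * ∑' n, (a n * x ^ n * p.eval (x ^ n) + a n * x ^ n * q.eval (x ^ n)) := by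
            rw [h]; ring
        _ = (1 - x) * ∑' n, a n * x ^ n * (p + q).eval (x ^ n) := by
            simp only [eval_add, mul_add]
  | monomial k c _ =>
      have hint : (∫ t in (0:ℝ)..1, (C c * X ^ (k+1)).eval t) = c / ((k:ℝ)+2) := by
        simp only [eval_mul, eval_C, eval_pow, eval_X]
        rw [intervalIntegral.integral_const_mul, integral_pow]
        push_cast
        ring
      have hval : A * ∫ t in (0:ℝ)..1, (C c * X ^ (k+1)).eval t = c * (A / (((k+1:ℕ):ℝ)+1)) := by
        rw [hint]; push_cast; ring
      rw [hval]
      refine Tendsto.congr (fun x => ?_) ((tendsto_monomial a A hlim (k+1)).const_mul c)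
      have hts : (∑' n, a n * x ^ n * eval (x ^ n) (C c * X ^ (k+1)))
          = ∑' n, c * (a n * x ^ n * (x ^ n) ^ (k+1)) :=
        tsum_congr fun n => by simp only [eval_mul, eval_C, eval_pow, eval_X]; ring
      rw [hts, tsum_mul_left]
      ring

noncomputable def g : ℝ → ℝ := fun t => if Real.exp (-1) ≤ t then t⁻¹ else 0

lemma exp_neg_one_pos : (0:ℝ) < Real.exp (-1) := Real.exp_pos _

lemma g_nonneg (t : ℝ) : 0 ≤ g t := by
  unfold g
  split
  · next h => exact inv_nonneg.2 (le_trans exp_neg_one_pos.le h)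
  · exact le_refl 0

lemma g_le_exp {t : ℝ} (ht : 0 < t) : g t ≤ Real.exp 1 := by
  unfold g
  split
  · next h =>
      have h2 : t⁻¹ ≤ (Real.exp (-1))⁻¹ := inv_anti₀ exp_neg_one_pos h
      rwa [← Real.exp_neg, neg_neg] at h2
  · exact (Real.exp_pos 1).le

lemma summable_g (ha : ∀ n, 0 ≤ a n)
    (hconv : ∀ x : ℝ, |x| < 1 → Summable (fun n => a n * x ^ n))
    {x : ℝ} (hx : x ∈ Set.Ioo (0:ℝ) 1) :
    Summable (fun n => a n * x ^ n * g (x ^ n)) := by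
  refine Summable.of_nonneg_of_le (fun n => ?_) (fun n => ?_)
    ((summable_base a hconv hx).mul_right (Real.exp 1))
  · exact mul_nonneg (mul_nonneg (ha n) (pow_nonneg hx.1.le n)) (g_nonneg _)
  · exact mul_le_mul_of_nonneg_left (g_le_exp (pow_pos hx.1 n))
      (mul_nonneg (ha n) (pow_nonneg hx.1.le n))

noncomputable def f0 : ℝ → ℝ := fun t => (max t (2 * Real.exp 1)⁻¹)⁻¹

lemma f0_cont : Continuous f0 := by
  apply (continuous_id.max continuous_const).inv₀
  intro t
  have : (0:ℝ) < (2 * Real.exp 1)⁻¹ := by positivity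
  exact ne_of_gt (lt_of_lt_of_le this (le_max_right _ _))

lemma f0_pos (t : ℝ) : 0 < f0 t := by
  unfold f0
  have : (0:ℝ) < (2 * Real.exp 1)⁻¹ := by positivity
  exact inv_pos.2 (lt_of_lt_of_le this (le_max_right _ _))

lemma f0_eq {t : ℝ} (ht : Real.exp (-1) ≤ t) : f0 t = t⁻¹ := by
  unfold f0
  rw [max_eq_left]
  calc (2 * Real.exp 1)⁻¹ ≤ (Real.exp 1)⁻¹ := by
        apply inv_anti₀ (Real.exp_pos 1)
        nlinarith [Real.exp_pos 1]
    _ = Real.exp (-1) := (Real.exp_neg 1).symm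
    _ ≤ t := ht

lemma f0_le (t : ℝ) : f0 t ≤ 2 * Real.exp 1 := by
  unfold f0
  calc (max t (2 * Real.exp 1)⁻¹)⁻¹ ≤ ((2 * Real.exp 1)⁻¹)⁻¹ :=
        inv_anti₀ (by positivity) (le_max_right _ _)
    _ = 2 * Real.exp 1 := inv_inv _

noncomputable def gu (δ : ℝ) : ℝ → ℝ :=
  fun t => min (max 0 ((t - (Real.exp (-1) - δ)) * (Real.exp 1 / δ))) (f0 t)

noncomputable def gl (δ : ℝ) : ℝ → ℝ :=
  fun t => min (max 0 ((t - Real.exp (-1)) * (Real.exp 1 / δ))) (f0 t)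

lemma gu_cont (δ : ℝ) : Continuous (gu δ) := by
  apply Continuous.min ?_ f0_cont
  exact continuous_const.max (((continuous_id.sub continuous_const)).mul continuous_const)

lemma gl_cont (δ : ℝ) : Continuous (gl δ) := by
  apply Continuous.min ?_ f0_cont
  exact continuous_const.max (((continuous_id.sub continuous_const)).mul continuous_const)

lemma gu_nonneg (δ : ℝ) (t : ℝ) : 0 ≤ gu δ t :=
  le_min (le_max_left _ _) (f0_pos t).le

lemma gl_nonneg (δ : ℝ) (t : ℝ) : 0 ≤ gl δ t :=
  le_min (le_max_left _ _) (f0_pos t).le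

lemma g_le_gu {δ : ℝ} (hδ : 0 < δ) (t : ℝ) : g t ≤ gu δ t := by
  unfold g gu
  split
  · next h =>
      refine le_min (le_trans ?_ (le_max_right _ _)) (le_of_eq (f0_eq h).symm)
      have h1 : t⁻¹ ≤ Real.exp 1 := by
        have h2 : t⁻¹ ≤ (Real.exp (-1))⁻¹ := inv_anti₀ exp_neg_one_pos h
        rwa [← Real.exp_neg, neg_neg] at h2
      have h3 : δ ≤ t - (Real.exp (-1) - δ) := by linarith
      calc t⁻¹ ≤ Real.exp 1 := h1
        _ = δ * (Real.exp 1 / δ) := by field_simp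
        _ ≤ (t - (Real.exp (-1) - δ)) * (Real.exp 1 / δ) := by
            apply mul_le_mul_of_nonneg_right h3
            positivity
  · exact gu_nonneg δ t

lemma gl_le_g {δ : ℝ} (hδ : 0 < δ) (t : ℝ) : gl δ t ≤ g t := by
  unfold g gl
  split
  · next h => exact le_trans (min_le_right _ _) (le_of_eq (f0_eq h))
  · next h =>
      push_neg at h
      refine le_trans (min_le_left _ _) (le_of_eq (max_eq_left ?_))
      apply mul_nonpos_of_nonpos_of_nonneg
      · linarith
      · positivity

lemma gu_eq_zero {δ t : ℝ} (hδ : 0 < δ) (ht : t ≤ Real.exp (-1) - δ) : gu δ t = 0 := by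
  unfold gu
  rw [max_eq_left, min_eq_left (f0_pos t).le]
  apply mul_nonpos_of_nonpos_of_nonneg
  · linarith
  · positivity

lemma gu_le_exp {δ t : ℝ} (hδ : 0 < δ) (ht : t ≤ Real.exp (-1)) :
    gu δ t ≤ Real.exp 1 := by
  refine le_trans (min_le_left _ _) (max_le (Real.exp_pos 1).le ?_)
  calc (t - (Real.exp (-1) - δ)) * (Real.exp 1 / δ) ≤ δ * (Real.exp 1 / δ) := by
        apply mul_le_mul_of_nonneg_right (by linarith) (by positivity)
    _ = Real.exp 1 := by field_simp

lemma gu_eq_inv {δ t : ℝ} (hδ : 0 < δ) (ht : Real.exp (-1) ≤ t) : gu δ t = t⁻¹ := by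
  unfold gu
  rw [min_eq_right, f0_eq ht]
  rw [f0_eq ht]
  refine le_trans ?_ (le_max_right _ _)
  have h1 : t⁻¹ ≤ Real.exp 1 := by
    have h2 : t⁻¹ ≤ (Real.exp (-1))⁻¹ := inv_anti₀ exp_neg_one_pos ht
    rwa [← Real.exp_neg, neg_neg] at h2
  calc t⁻¹ ≤ Real.exp 1 := h1
    _ = δ * (Real.exp 1 / δ) := by field_simp
    _ ≤ (t - (Real.exp (-1) - δ)) * (Real.exp 1 / δ) := by
        apply mul_le_mul_of_nonneg_right (by linarith) (by positivity)

lemma gl_eq_inv {δ t : ℝ} (hδ : 0 < δ) (ht : Real.exp (-1) + δ ≤ t) : gl δ t = t⁻¹ := by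
  have ht' : Real.exp (-1) ≤ t := by linarith
  unfold gl
  rw [min_eq_right, f0_eq ht']
  rw [f0_eq ht']
  refine le_trans ?_ (le_max_right _ _)
  have h1 : t⁻¹ ≤ Real.exp 1 := by
    have h2 : t⁻¹ ≤ (Real.exp (-1))⁻¹ := inv_anti₀ exp_neg_one_pos ht'
    rwa [← Real.exp_neg, neg_neg] at h2
  calc t⁻¹ ≤ Real.exp 1 := h1
    _ = δ * (Real.exp 1 / δ) := by field_simp
    _ ≤ (t - Real.exp (-1)) * (Real.exp 1 / δ) := by
        apply mul_le_mul_of_nonneg_right (by linarith) (by positivity)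

lemma exp_neg_one_le_half : Real.exp (-1) ≤ 1/2 := by
  rw [Real.exp_neg]
  rw [inv_le_comm₀ (Real.exp_pos 1) (by norm_num)]
  have := Real.add_one_le_exp 1
  linarith

lemma integral_gu {δ : ℝ} (hδ : 0 < δ) (hδ2 : δ ≤ Real.exp (-1) / 2) :
    (∫ t in (0:ℝ)..1, gu δ t) ≤ 1 + Real.exp 1 * δ := by
  set c := Real.exp (-1) - δ with hc
  have hc0 : 0 ≤ c := by have := exp_neg_one_pos; simp only [hc]; linarith
  have hce : c ≤ Real.exp (-1) := by simp only [hc]; linarith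
  have he1 : Real.exp (-1) ≤ 1 := by
    rw [Real.exp_le_one_iff]; norm_num
  have hint : ∀ u v : ℝ, IntervalIntegrable (gu δ) MeasureTheory.volume u v :=
    fun u v => (gu_cont δ).intervalIntegrable u v
  have hsplit : (∫ t in (0:ℝ)..1, gu δ t)
      = (∫ t in (0:ℝ)..c, gu δ t) + (∫ t in c..(Real.exp (-1)), gu δ t)
        + ∫ t in (Real.exp (-1))..1, gu δ t := by
    rw [intervalIntegral.integral_add_adjacent_intervals (hint 0 c) (hint c _),
      intervalIntegral.integral_add_adjacent_intervals (hint 0 _) (hint _ 1)]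
  have h1 : (∫ t in (0:ℝ)..c, gu δ t) = 0 := by
    rw [intervalIntegral.integral_congr (g := fun _ => (0:ℝ)), intervalIntegral.integral_const]
    · simp
    · intro t ht
      rw [Set.uIcc_of_le hc0] at ht
      exact gu_eq_zero hδ ht.2
  have h2 : (∫ t in c..(Real.exp (-1)), gu δ t) ≤ Real.exp 1 * δ := by
    calc (∫ t in c..(Real.exp (-1)), gu δ t)
        ≤ ∫ _ in c..(Real.exp (-1)), Real.exp 1 := by
          apply intervalIntegral.integral_mono_on hce (hint c _)
            (intervalIntegrable_const)
          intro t ht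
          exact gu_le_exp hδ ht.2
      _ = Real.exp 1 * δ := by
          rw [intervalIntegral.integral_const, smul_eq_mul, hc]
          ring
  have h3 : (∫ t in (Real.exp (-1))..1, gu δ t) = 1 := by
    rw [intervalIntegral.integral_congr (g := fun t => t⁻¹)]
    · rw [integral_inv_of_pos exp_neg_one_pos one_pos]
      rw [one_div, ← Real.exp_neg, neg_neg, Real.log_exp]
    · intro t ht
      rw [Set.uIcc_of_le he1] at ht
      exact gu_eq_inv hδ ht.1
  rw [hsplit, h1, h3]
  linarith

lemma integral_gl {δ : ℝ} (hδ : 0 < δ) (hδ2 : δ ≤ Real.exp (-1) / 2) :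
    1 - Real.exp 1 * δ ≤ ∫ t in (0:ℝ)..1, gl δ t := by
  set d := Real.exp (-1) + δ with hd
  have hd0 : 0 < d := by have := exp_neg_one_pos; simp only [hd]; linarith
  have hd1 : d ≤ 1 := by
    have h1 := exp_neg_one_le_half
    have h2 := exp_neg_one_pos
    simp only [hd]; linarith
  have hint : ∀ u v : ℝ, IntervalIntegrable (gl δ) MeasureTheory.volume u v :=
    fun u v => (gl_cont δ).intervalIntegrable u v
  have hsplit : (∫ t in (0:ℝ)..1, gl δ t)
      = (∫ t in (0:ℝ)..d, gl δ t) + ∫ t in d..1, gl δ t :=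
    (intervalIntegral.integral_add_adjacent_intervals (hint 0 d) (hint d 1)).symm
  have h1 : 0 ≤ ∫ t in (0:ℝ)..d, gl δ t :=
    intervalIntegral.integral_nonneg hd0.le (fun u _ => gl_nonneg δ u)
  have h2 : (∫ t in d..1, gl δ t) = Real.log (1/d) := by
    rw [intervalIntegral.integral_congr (g := fun t => t⁻¹)]
    · exact integral_inv_of_pos hd0 one_pos
    · intro t ht
      rw [Set.uIcc_of_le hd1] at ht
      exact gl_eq_inv hδ ht.1
  have h3 : 1 - Real.exp 1 * δ ≤ Real.log (1/d) := by
    have hdd : d = Real.exp (-1) * (1 + Real.exp 1 * δ) := by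
      rw [hd, mul_add, mul_one, Real.exp_neg]
      field_simp
    have h4 : Real.log d ≤ -1 + Real.exp 1 * δ := by
      rw [hdd, Real.log_mul (Real.exp_ne_zero _) (by positivity), Real.log_exp]
      have h5 : Real.log (1 + Real.exp 1 * δ) ≤ (1 + Real.exp 1 * δ) - 1 :=
        Real.log_le_sub_one_of_pos (by positivity)
      linarith
    rw [one_div, Real.log_inv]
    linarith
  rw [hsplit]
  linarith

lemma tendsto_S (ha : ∀ n, 0 ≤ a n)
    (hconv : ∀ x : ℝ, |x| < 1 → Summable (fun n => a n * x ^ n)) (A : ℝ)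
    (hlim : Tendsto (fun x : ℝ => (1 - x) * ∑' n, a n * x ^ n) (𝓝[<] (1:ℝ)) (𝓝 A)) :
    Tendsto (fun x : ℝ => (1 - x) * ∑' n, a n * x ^ n * g (x ^ n)) (𝓝[<] (1:ℝ)) (𝓝 A) := by
  have hIoo : ∀ᶠ x in 𝓝[<] (1:ℝ), x ∈ Ioo (0:ℝ) 1 := by
    rw [← nhdsWithin_Ioo_eq_nhdsLT (zero_lt_one (α := ℝ))]
    exact self_mem_nhdsWithin
  have hA : 0 ≤ A := by
    refine ge_of_tendsto hlim ?_
    filter_upwards [hIoo] with x hx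
    exact mul_nonneg (by linarith [hx.2]) (tsum_nonneg fun n =>
      mul_nonneg (ha n) (pow_nonneg hx.1.le n))
  rw [Metric.tendsto_nhds]
  intro ε hε
  have hepos : (0:ℝ) < Real.exp 1 + 2 := by positivity
  set η := min (Real.exp (-1)/2) (ε / (8 * (Real.exp 1 + 2) * (A+1))) with hηdef
  have hη0 : 0 < η := lt_min (by positivity) (by positivity)
  have hη1 : η ≤ Real.exp (-1)/2 := min_le_left _ _
  have hη2 : η * (8 * (Real.exp 1 + 2) * (A+1)) ≤ ε := by
    have h := min_le_right (Real.exp (-1)/2) (ε / (8 * (Real.exp 1 + 2) * (A+1)))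
    rw [← hηdef] at h
    rw [← le_div_iff₀ (by positivity)]
    exact h
  have key : A * ((Real.exp 1 + 2) * η) ≤ ε/8 := by nlinarith [hη0.le, hA]
  obtain ⟨p, hp⟩ := exists_polynomial_near_of_continuousOn 0 1 (gu η)
    (gu_cont η).continuousOn η hη0
  obtain ⟨p', hp'⟩ := exists_polynomial_near_of_continuousOn 0 1 (gl η)
    (gl_cont η).continuousOn η hη0
  set q := p + C η with hqdef
  set r := p' - C η with hrdef
  have hgq : ∀ t ∈ Icc (0:ℝ) 1, g t ≤ q.eval t := by
    intro t ht
    have h1 := abs_lt.1 (hp t ht)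
    have h2 := g_le_gu hη0 t
    simp only [hqdef, eval_add, eval_C]
    linarith [h1.1]
  have hrg : ∀ t ∈ Icc (0:ℝ) 1, r.eval t ≤ g t := by
    intro t ht
    have h1 := abs_lt.1 (hp' t ht)
    have h2 := gl_le_g hη0 t
    simp only [hrdef, eval_sub, eval_C]
    linarith [h1.2]
  have hqint : (∫ t in (0:ℝ)..1, q.eval t) ≤ 1 + (Real.exp 1 + 2) * η := by
    have h1 : (∫ t in (0:ℝ)..1, q.eval t) ≤ ∫ t in (0:ℝ)..1, (gu η t + 2*η) := by
      apply intervalIntegral.integral_mono_on zero_le_one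
        (q.continuous.intervalIntegrable 0 1)
        (((gu_cont η).add continuous_const).intervalIntegrable 0 1)
      intro t ht
      have h1 := abs_lt.1 (hp t ht)
      simp only [hqdef, eval_add, eval_C, Pi.add_apply]
      linarith [h1.2]
    have h2 : (∫ t in (0:ℝ)..1, (gu η t + 2*η)) = (∫ t in (0:ℝ)..1, gu η t) + 2*η := by
      rw [intervalIntegral.integral_add ((gu_cont η).intervalIntegrable 0 1)
        intervalIntegrable_const, intervalIntegral.integral_const]
      simp
    have h3 := integral_gu hη0 hη1
    rw [h2] at h1
    linarith
  have hrint : 1 - (Real.exp 1 + 2) * η ≤ ∫ t in (0:ℝ)..1, r.eval t := by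
    have h1 : (∫ t in (0:ℝ)..1, (gl η t - 2*η)) ≤ ∫ t in (0:ℝ)..1, r.eval t := by
      apply intervalIntegral.integral_mono_on zero_le_one
        (((gl_cont η).sub continuous_const).intervalIntegrable 0 1)
        (r.continuous.intervalIntegrable 0 1)
      intro t ht
      have h1 := abs_lt.1 (hp' t ht)
      simp only [hrdef, eval_sub, eval_C, Pi.sub_apply]
      linarith [h1.1]
    have h2 : (∫ t in (0:ℝ)..1, (gl η t - 2*η)) = (∫ t in (0:ℝ)..1, gl η t) - 2*η := by
      rw [intervalIntegral.integral_sub ((gl_cont η).intervalIntegrable 0 1)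
        intervalIntegrable_const, intervalIntegral.integral_const]
      simp
    have h3 := integral_gl hη0 hη1
    rw [h2] at h1
    linarith
  have hAq : A * ∫ t in (0:ℝ)..1, q.eval t ≤ A + ε/8 := by
    have := mul_le_mul_of_nonneg_left hqint hA
    nlinarith [key]
  have hAr : A - ε/8 ≤ A * ∫ t in (0:ℝ)..1, r.eval t := by
    have := mul_le_mul_of_nonneg_left hrint hA
    nlinarith [key]
  have hup := tendsto_poly a ha hconv A hlim q
  have hlow := tendsto_poly a ha hconv A hlim r
  rw [Metric.tendsto_nhds] at hup hlow
  filter_upwards [hIoo, hup (ε/8) (by positivity), hlow (ε/8) (by positivity)] with x hx hux hlx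
  rw [Real.dist_eq] at hux hlx ⊢
  have hxmem : ∀ n : ℕ, x ^ n ∈ Icc (0:ℝ) 1 :=
    fun n => ⟨pow_nonneg hx.1.le n, pow_le_one₀ hx.1.le hx.2.le⟩
  have h1x : (0:ℝ) ≤ 1 - x := by linarith [hx.2]
  have hSu : (1 - x) * (∑' n, a n * x ^ n * g (x ^ n))
      ≤ (1 - x) * ∑' n, a n * x ^ n * q.eval (x ^ n) := by
    apply mul_le_mul_of_nonneg_left ?_ h1x
    apply Summable.tsum_le_tsum ?_ (summable_g a ha hconv hx) (summable_poly a ha hconv hx q)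
    intro n
    exact mul_le_mul_of_nonneg_left (hgq _ (hxmem n)) (mul_nonneg (ha n) (pow_nonneg hx.1.le n))
  have hSl : (1 - x) * (∑' n, a n * x ^ n * r.eval (x ^ n))
      ≤ (1 - x) * ∑' n, a n * x ^ n * g (x ^ n) := by
    apply mul_le_mul_of_nonneg_left ?_ h1x
    apply Summable.tsum_le_tsum ?_ (summable_poly a ha hconv hx r) (summable_g a ha hconv hx)
    intro n
    exact mul_le_mul_of_nonneg_left (hrg _ (hxmem n)) (mul_nonneg (ha n) (pow_nonneg hx.1.le n))
  have e1 := abs_lt.1 hux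
  have e2 := abs_lt.1 hlx
  rw [abs_lt]
  constructor
  · linarith [e2.1, hSl, hAr]
  · linarith [e1.2, hSu, hAq]

lemma sum_eq (ha : ∀ n, 0 ≤ a n) {N : ℕ} (hN : 1 ≤ N) :
    (∑' n, a n * (Real.exp (-(N:ℝ)⁻¹)) ^ n * g ((Real.exp (-(N:ℝ)⁻¹)) ^ n))
      = ∑ n ∈ Finset.range (N + 1), a n := by
  have hNpos : (0:ℝ) < N := by exact_mod_cast hN
  have hxn : ∀ n : ℕ, (Real.exp (-(N:ℝ)⁻¹)) ^ n = Real.exp (-(n/(N:ℝ))) := by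
    intro n
    rw [← Real.exp_nat_mul]
    congr 1
    field_simp
  rw [tsum_eq_sum (s := Finset.range (N+1)) ?_]
  · apply Finset.sum_congr rfl
    intro n hn
    rw [Finset.mem_range, Nat.lt_succ_iff] at hn
    have hle : Real.exp (-1) ≤ (Real.exp (-(N:ℝ)⁻¹)) ^ n := by
      rw [hxn n, Real.exp_le_exp]
      rw [neg_le_neg_iff, div_le_one hNpos]
      exact_mod_cast hn
    unfold g
    rw [if_pos hle, hxn n, mul_assoc, mul_inv_cancel₀ (Real.exp_ne_zero _), mul_one]
  · intro n hn
    rw [Finset.mem_range, Nat.lt_succ_iff] at hn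
    push_neg at hn
    have hlt : (Real.exp (-(N:ℝ)⁻¹)) ^ n < Real.exp (-1) := by
      rw [hxn n, Real.exp_lt_exp, neg_lt_neg_iff, lt_div_iff₀ hNpos, one_mul]
      exact_mod_cast hn
    unfold g
    rw [if_neg (not_le.2 hlt), mul_zero]

lemma tendsto_x (hN : True) : Tendsto (fun N : ℕ => Real.exp (-(N:ℝ)⁻¹)) atTop (𝓝[<] (1:ℝ)) := by
  rw [tendsto_nhdsWithin_iff]
  constructor
  · have h1 : Tendsto (fun N : ℕ => -((N:ℝ)⁻¹)) atTop (𝓝 0) := by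
      simpa using (tendsto_inv_atTop_nhds_zero_nat : Tendsto (fun n : ℕ => ((n:ℝ))⁻¹) atTop (𝓝 0)).neg
    have := (Real.continuous_exp.tendsto 0).comp h1
    simpa [Function.comp_def] using this
  · filter_upwards [eventually_ge_atTop 1] with N hN1
    have hNpos : (0:ℝ) < N := by exact_mod_cast hN1
    have : -(N:ℝ)⁻¹ < 0 := by
      simp only [neg_neg, Left.neg_neg_iff]
      positivity
    calc Real.exp (-(N:ℝ)⁻¹) < Real.exp 0 := Real.exp_lt_exp.2 this
      _ = 1 := Real.exp_zero

lemma tendsto_N_mul : Tendsto (fun N : ℕ => (N:ℝ) * (1 - Real.exp (-(N:ℝ)⁻¹))) atTop (𝓝 1) := by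
  have hlow : Tendsto (fun N : ℕ => 1 - 1/((N:ℝ)+1)) atTop (𝓝 1) := by
    have := tendsto_one_div_add_atTop_nhds_zero_nat (𝕜 := ℝ)
    simpa using (tendsto_const_nhds (x := (1:ℝ)) (f := atTop)).sub this
  refine tendsto_of_tendsto_of_tendsto_of_le_of_le' hlow tendsto_const_nhds ?_ ?_
  · filter_upwards [eventually_ge_atTop 1] with N hN1
    have hNpos : (0:ℝ) < N := by exact_mod_cast hN1
    set h := (N:ℝ)⁻¹ with hh
    have hpos : 0 < h := by positivity
    have hNh : (N:ℝ) * h = 1 := mul_inv_cancel₀ hNpos.ne'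
    have hexp : Real.exp (-h) ≤ (1+h)⁻¹ := by
      rw [Real.exp_neg]
      apply inv_anti₀ (by positivity)
      linarith [Real.add_one_le_exp h]
    have hfrac : 1 - 1/((N:ℝ)+1) ≤ (N:ℝ) * (1 - (1+h)⁻¹) := by
      have h1 : (1:ℝ) + h = ((N:ℝ)+1)/(N:ℝ) := by rw [hh]; field_simp
      rw [h1]
      rw [inv_div]
      have h2 : 1 - (N:ℝ)/((N:ℝ)+1) = 1/((N:ℝ)+1) := by field_simp; ring
      rw [h2]
      rw [mul_one_div]
      apply le_of_eq
      field_simp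
      ring
    refine le_trans hfrac ?_
    apply mul_le_mul_of_nonneg_left ?_ hNpos.le
    linarith [hexp]
  · filter_upwards [eventually_ge_atTop 1] with N hN1
    have hNpos : (0:ℝ) < N := by exact_mod_cast hN1
    have hexp : 1 - (N:ℝ)⁻¹ ≤ Real.exp (-(N:ℝ)⁻¹) := by
      have := Real.add_one_le_exp (-(N:ℝ)⁻¹)
      linarith
    calc (N:ℝ) * (1 - Real.exp (-(N:ℝ)⁻¹)) ≤ (N:ℝ) * (N:ℝ)⁻¹ := by
          apply mul_le_mul_of_nonneg_left ?_ hNpos.le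
          linarith
      _ = 1 := mul_inv_cancel₀ hNpos.ne'

lemma tendsto_cesaro (ha : ∀ n, 0 ≤ a n)
    (hconv : ∀ x : ℝ, |x| < 1 → Summable (fun n => a n * x ^ n)) (A : ℝ)
    (hlim : Tendsto (fun x : ℝ => (1 - x) * ∑' n, a n * x ^ n) (𝓝[<] (1:ℝ)) (𝓝 A)) :
    Tendsto (fun N : ℕ => (∑ n ∈ Finset.range (N + 1), a n) / N) atTop (𝓝 A) := by
  have hS := (tendsto_S a ha hconv A hlim).comp (tendsto_x trivial)
  have hM := tendsto_N_mul
  have hMinv : Tendsto (fun N : ℕ => ((N:ℝ) * (1 - Real.exp (-(N:ℝ)⁻¹)))⁻¹) atTop (𝓝 1) := by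
    simpa using hM.inv₀ one_ne_zero
  have hprod := hS.mul hMinv
  rw [mul_one] at hprod
  refine Tendsto.congr' ?_ hprod
  filter_upwards [eventually_ge_atTop 1] with N hN1
  have hNpos : (0:ℝ) < N := by exact_mod_cast hN1
  have hx1 : Real.exp (-(N:ℝ)⁻¹) < 1 := by
    calc Real.exp (-(N:ℝ)⁻¹) < Real.exp 0 := by
          rw [Real.exp_lt_exp]
          simp only [Left.neg_neg_iff]
          positivity
      _ = 1 := Real.exp_zero
  have hx0 : (0:ℝ) < 1 - Real.exp (-(N:ℝ)⁻¹) := by linarith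
  show (1 - Real.exp (-(N:ℝ)⁻¹)) * (∑' n, a n * _ ^ n * g (_ ^ n))
      * ((N:ℝ) * (1 - Real.exp (-(N:ℝ)⁻¹)))⁻¹ = _
  rw [sum_eq a ha hN1]
  rw [mul_inv, div_eq_mul_inv]
  calc (1 - Real.exp (-(N:ℝ)⁻¹)) * (∑ n ∈ Finset.range (N + 1), a n)
        * ((N:ℝ)⁻¹ * (1 - Real.exp (-(N:ℝ)⁻¹))⁻¹)
      = (∑ n ∈ Finset.range (N + 1), a n) * (N:ℝ)⁻¹
        * ((1 - Real.exp (-(N:ℝ)⁻¹)) * (1 - Real.exp (-(N:ℝ)⁻¹))⁻¹) := by ring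
    _ = (∑ n ∈ Finset.range (N + 1), a n) * (N:ℝ)⁻¹ := by
        rw [mul_inv_cancel₀ hx0.ne', mul_one]

end HL

theorem stmt_14 (a : ℕ → ℝ) (ha : ∀ n, 0 ≤ a n) (A : ℝ)
    (hconv : ∀ x : ℝ, |x| < 1 → Summable (fun n => a n * x ^ n))
    (hlim : Filter.Tendsto (fun x : ℝ => (1 - x) * ∑' n, a n * x ^ n)
      (nhdsWithin 1 (Set.Iio 1)) (nhds A)) :
    (fun N : ℕ => (∑ n ∈ Finset.range (N + 1), a n) - A * N)
      =o[Filter.atTop] (fun N : ℕ => (N : ℝ)) := by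
  have hces := HL.tendsto_cesaro a ha hconv A hlim
  rw [Asymptotics.isLittleO_iff_tendsto' ?_]
  · have h0 := hces.sub_const A
    rw [sub_self] at h0
    refine Tendsto.congr' ?_ h0
    filter_upwards [eventually_ge_atTop 1] with N hN1
    have hNpos : (0:ℝ) < N := by exact_mod_cast hN1
    field_simp
  · filter_upwards [eventually_ge_atTop 1] with N hN1 h0
    have hNpos : (0:ℝ) < N := by exact_mod_cast hN1
    exact absurd h0 hNpos.ne'
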